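/- Consider the k-linear map d : k[z] ⊕ k[w] → k[z, z⁻¹] defined by d(f, g) = f(z) - z⁻² · g(z⁻¹). Then the cokernel of d is a one-dimensional k-vector space, spanned by the class of z⁻¹. (This computes H¹(ℙ¹, O(-2)) via the Čech complex.) -/

import Mathlib

open LaurentPolynomial

variable (k : Type*) [Field k]

/-- The map `d : k[z] ⊕ k[w] → k[z, z⁻¹]`, `d(f, g) = f(z) - z⁻²·g(z⁻¹)`:
the Čech differential computing `H¹(ℙ¹, O(-2))`. -/
noncomputable def cechMapMinusTwo :
    (Polynomial k × Polynomial k) →ₗ[k] LaurentPolynomial k :=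
  (Polynomial.toLaurentAlg (R := k)).toLinearMap.comp (LinearMap.fst k _ _)
    - (LinearMap.mulLeft k (T (-2) : LaurentPolynomial k)).comp
        ((Polynomial.aeval (T (-1) : LaurentPolynomial k)).toLinearMap.comp
          (LinearMap.snd k _ _))

lemma cechMapMinusTwo_apply (f g : Polynomial k) :
    cechMapMinusTwo k (f, g) =
      Polynomial.toLaurent f - T (-2) * Polynomial.aeval (T (-1) : LaurentPolynomial k) g := by
  simp [cechMapMinusTwo, Polynomial.toLaurentAlg_apply]

noncomputable def phiCoeff : LaurentPolynomial k →ₗ[k] k := (Finsupp.lapply (-1)).comp (AddMonoidAlgebra.coeffLinearEquiv k).toLinearMap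

lemma phiCoeff_single (n : ℤ) (a : k) (h : n ≠ -1) :
    phiCoeff k (AddMonoidAlgebra.single n a) = 0 := by
  rw [phiCoeff]
  exact Finsupp.single_eq_of_ne' h

lemma phiCoeff_T_neg_one : phiCoeff k (T (-1)) = 1 := by
  rw [phiCoeff, LaurentPolynomial.T]
  exact Finsupp.single_eq_same (a := (-1 : ℤ)) (b := (1 : k))

lemma phiCoeff_range (x : LaurentPolynomial k)
    (hx : x ∈ LinearMap.range (cechMapMinusTwo k)) : phiCoeff k x = 0 := by
  obtain ⟨⟨f, g⟩, rfl⟩ := hx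
  rw [cechMapMinusTwo_apply, map_sub]
  have h1 : phiCoeff k (Polynomial.toLaurent f) = 0 := by
    induction f using Polynomial.induction_on' with
    | add p q hp hq => rw [map_add, map_add, hp, hq, add_zero]
    | monomial n a =>
      rw [Polynomial.toLaurent_C_mul_T, ← single_eq_C_mul_T]
      exact phiCoeff_single k _ _ (by omega)
  have h2 : phiCoeff k (T (-2) * Polynomial.aeval (T (-1) : LaurentPolynomial k) g) = 0 := by
    induction g using Polynomial.induction_on' with
    | add p q hp hq => rw [map_add, mul_add, map_add, hp, hq, add_zero]
    | monomial n a =>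
      rw [Polynomial.aeval_monomial, T_pow]
      have : (algebraMap k (LaurentPolynomial k)) a = C a := rfl
      rw [this, mul_left_comm, ← T_add, ← single_eq_C_mul_T]
      exact phiCoeff_single k _ _ (by omega)
  rw [h1, h2, sub_zero]

lemma T_mem (n : ℤ) :
    (T n : LaurentPolynomial k) ∈
      LinearMap.range (cechMapMinusTwo k) ⊔ Submodule.span k {(T (-1) : LaurentPolynomial k)} := by
  rcases le_or_gt 0 n with hn | hn
  · apply Submodule.mem_sup_left
    refine ⟨(Polynomial.X ^ n.toNat, 0), ?_⟩
    rw [cechMapMinusTwo_apply]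
    simp [Polynomial.toLaurent_X_pow, hn]
  · rcases eq_or_lt_of_le (by omega : n ≤ -1) with h | h
    · exact Submodule.mem_sup_right (Submodule.subset_span (h ▸ rfl))
    · apply Submodule.mem_sup_left
      refine ⟨(0, -(Polynomial.X ^ (-2 - n).toNat)), ?_⟩
      rw [cechMapMinusTwo_apply]
      simp only [map_zero, zero_sub, map_neg, map_pow, Polynomial.aeval_X, mul_neg, neg_neg]
      rw [T_pow, ← T_add]
      congr 1
      omega

lemma sup_eq_top :
    LinearMap.range (cechMapMinusTwo k) ⊔ Submodule.span k {(T (-1) : LaurentPolynomial k)}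
      = ⊤ := by
  rw [eq_top_iff]
  rintro x -
  induction x using AddMonoidAlgebra.induction_linear with
  | zero => exact Submodule.zero_mem _
  | add p q hp hq => exact Submodule.add_mem _ hp hq
  | single n a =>
    have : (AddMonoidAlgebra.single n a : LaurentPolynomial k) = a • T n := by
      rw [LaurentPolynomial.T, AddMonoidAlgebra.smul_single, smul_eq_mul, mul_one]
    rw [this]
    exact Submodule.smul_mem _ _ (T_mem k n)

/-- The cokernel of `d(f,g) = f(z) - z⁻²·g(z⁻¹)` is a one-dimensional `k`-vector space,
spanned by the class of `z⁻¹`.  (This computes `H¹(ℙ¹, O(-2))` via the Čech complex.) -/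
theorem coker_cechMapMinusTwo :
    Module.finrank k (LaurentPolynomial k ⧸ LinearMap.range (cechMapMinusTwo k)) = 1
      ∧ Submodule.span k
          {Submodule.Quotient.mk (p := LinearMap.range (cechMapMinusTwo k))
            (T (-1) : LaurentPolynomial k)} = ⊤ := by
  set R := LinearMap.range (cechMapMinusTwo k)
  have hspan : Submodule.span k
      {Submodule.Quotient.mk (p := R) (T (-1) : LaurentPolynomial k)} = ⊤ := by
    rw [eq_top_iff]
    rintro x -
    obtain ⟨y, rfl⟩ := Submodule.Quotient.mk_surjective R x
    have hy : y ∈ R ⊔ Submodule.span k {(T (-1) : LaurentPolynomial k)} := by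
      rw [sup_eq_top k]; trivial
    obtain ⟨a, ha, b, hb, rfl⟩ := Submodule.mem_sup.mp hy
    obtain ⟨c, rfl⟩ := Submodule.mem_span_singleton.mp hb
    rw [Submodule.Quotient.mk_add, (Submodule.Quotient.mk_eq_zero R).mpr ha, zero_add,
      Submodule.Quotient.mk_smul]
    exact Submodule.mem_span_singleton.mpr ⟨c, rfl⟩
  have hne : (Submodule.Quotient.mk (p := R) (T (-1) : LaurentPolynomial k)) ≠ 0 := by
    intro h
    rw [Submodule.Quotient.mk_eq_zero] at h
    have := phiCoeff_range k _ h
    rw [phiCoeff_T_neg_one] at this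
    exact one_ne_zero this
  refine ⟨?_, hspan⟩
  apply finrank_eq_one _ hne
  intro w
  have hw : w ∈ Submodule.span k
      {Submodule.Quotient.mk (p := R) (T (-1) : LaurentPolynomial k)} := hspan ▸ trivial
  obtain ⟨c, hc⟩ := Submodule.mem_span_singleton.mp hw
  exact ⟨c, hc⟩
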